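/- arXiv:1506.01158 — 2 statements merged into one kernel-verified Lean document; each statement's English description precedes it below -/
import Mathlib

section
/- Let $G$ be the set of càdlàg functions $g : [\sigma_g, 2] \to [-1,1]$ with $\sigma_g \in [-1,1]$, such that $g$ is constant on $[1,2]$. For $g, h \in G$, let $\Lambda[g,h]$ be the set of strictly increasing bijections $\lambda : [\sigma_g, 2] \to [\sigma_h, 2]$ with $\gamma_{g,h}(\lambda) := \sup_{\sigma_g \le t < s \le 2} |\log \frac{\lambda(s)-\lambda(t)}{s-t}| < \infty$, and set $d(g,h,\lambda) = \sup_{t \in [\sigma_g,2]} |g(t) - h(\lambda(t))|$, $\rho(g,h) = \inf_{\lambda \in \Lambda[g,h]} (\gamma_{g,h}(\lambda) \vee d(g,h,\lambda))$, and $d(g,h) = \rho(g,h) \vee |\sigma_g - \sigma_h|$. Then $d$ is a metric on $G$. -/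
open scoped ENNReal

/-- An element of `G`: a càdlàg path `g : [σ, 2] → [-1,1]` with `σ ∈ [-1,1]`,
constant on `[1,2]`.  The underlying function is defined on all of `ℝ` and
normalized to be constant to the left of `σ` and to the right of `2`. -/
structure GPath where
  σ : ℝ
  hσ : σ ∈ Set.Icc (-1 : ℝ) 1
  f : ℝ → ℝ
  mem_range : ∀ t ∈ Set.Icc σ 2, f t ∈ Set.Icc (-1 : ℝ) 1
  right_cont : ∀ t ∈ Set.Ico σ 2, ContinuousWithinAt f (Set.Ici t) t
  left_lim : ∀ t ∈ Set.Ioc σ 2, ∃ L : ℝ, Filter.Tendsto f (nhdsWithin t (Set.Iio t)) (nhds L)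
  const_tail : ∀ t ∈ Set.Icc (1 : ℝ) 2, f t = f 1
  ext_left : ∀ t, t ≤ σ → f t = f σ
  ext_right : ∀ t, 2 ≤ t → f t = f 2

/-- The logarithmic distortion `γ_{g,h}(λ)` of a time change. -/
noncomputable def gamma (g : GPath) (l : ℝ → ℝ) : ℝ≥0∞ :=
  ⨆ p : {p : ℝ × ℝ // g.σ ≤ p.1 ∧ p.1 < p.2 ∧ p.2 ≤ 2},
    ENNReal.ofReal |Real.log ((l p.1.2 - l p.1.1) / (p.1.2 - p.1.1))|

/-- `Λ[g,h]`: strictly increasing bijections `[σ_g,2] → [σ_h,2]` of finite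
logarithmic distortion. -/
def Lam (g h : GPath) : Set (ℝ → ℝ) :=
  {l | StrictMonoOn l (Set.Icc g.σ 2) ∧ l '' Set.Icc g.σ 2 = Set.Icc h.σ 2 ∧
    gamma g l ≠ ⊤}

/-- `d(g,h,λ) = sup_{t ∈ [σ_g,2]} |g(t) - h(λ(t))|`. -/
noncomputable def dSup (g h : GPath) (l : ℝ → ℝ) : ℝ≥0∞ :=
  ⨆ t : Set.Icc g.σ 2, ENNReal.ofReal |g.f t - h.f (l t)|

/-- `ρ(g,h) = inf_{λ ∈ Λ[g,h]} (γ_{g,h}(λ) ∨ d(g,h,λ))`. -/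
noncomputable def rho (g h : GPath) : ℝ≥0∞ :=
  ⨅ l ∈ Lam g h, max (gamma g l) (dSup g h l)

/-- `d(g,h) = ρ(g,h) ∨ |σ_g - σ_h|`. -/
noncomputable def Gdist (g h : GPath) : ℝ :=
  (max (rho g h) (ENNReal.ofReal |g.σ - h.σ|)).toReal

-- helpers
lemma GPath.σ_le_one (g : GPath) : g.σ ≤ 1 := g.hσ.2
lemma GPath.σ_lt_two (g : GPath) : g.σ < 2 := lt_of_le_of_lt g.σ_le_one one_lt_two
lemma GPath.neg_one_le_σ (g : GPath) : -1 ≤ g.σ := g.hσ.1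

lemma le_gamma (g : GPath) (l : ℝ → ℝ) {t s : ℝ} (h1 : g.σ ≤ t) (h2 : t < s) (h3 : s ≤ 2) :
    ENNReal.ofReal |Real.log ((l s - l t) / (s - t))| ≤ gamma g l :=
  le_iSup (fun p : {p : ℝ × ℝ // g.σ ≤ p.1 ∧ p.1 < p.2 ∧ p.2 ≤ 2} =>
    ENNReal.ofReal |Real.log ((l p.1.2 - l p.1.1) / (p.1.2 - p.1.1))|) ⟨(t, s), h1, h2, h3⟩

lemma le_dSup (g h : GPath) (l : ℝ → ℝ) {t : ℝ} (ht : t ∈ Set.Icc g.σ 2) :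
    ENNReal.ofReal |g.f t - h.f (l t)| ≤ dSup g h l :=
  le_iSup (fun t : Set.Icc g.σ 2 => ENNReal.ofReal |g.f t - h.f (l t)|) ⟨t, ht⟩

lemma rho_le (g h : GPath) {l : ℝ → ℝ} (hl : l ∈ Lam g h) :
    rho g h ≤ max (gamma g l) (dSup g h l) := iInf₂_le l hl

lemma gamma_id (g : GPath) : gamma g id = 0 := by
  refine le_antisymm (iSup_le fun p => ?_) (zero_le)
  obtain ⟨⟨t, s⟩, h1, h2, h3⟩ := p
  simp only [id]
  rw [div_self (by linarith : s - t ≠ 0), Real.log_one, abs_zero, ENNReal.ofReal_zero]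

lemma dSup_self_id (g : GPath) : dSup g g id = 0 := by
  refine le_antisymm (iSup_le fun p => ?_) (zero_le)
  simp

lemma id_mem_Lam (g : GPath) : id ∈ Lam g g :=
  ⟨strictMonoOn_id, Set.image_id _, by rw [gamma_id]; exact ENNReal.zero_ne_top⟩

lemma rho_self (g : GPath) : rho g g = 0 := by
  refine le_antisymm ?_ (zero_le)
  have := rho_le g g (id_mem_Lam g)
  rwa [gamma_id, dSup_self_id, max_self] at this

noncomputable def laff (g h : GPath) : ℝ → ℝ :=
  fun t => (2 - h.σ) / (2 - g.σ) * t + (h.σ - (2 - h.σ) / (2 - g.σ) * g.σ)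

lemma laff_c_pos (g h : GPath) : 0 < (2 - h.σ) / (2 - g.σ) :=
  div_pos (by linarith [h.σ_lt_two]) (by linarith [g.σ_lt_two])

lemma laff_image (g h : GPath) : laff g h '' Set.Icc g.σ 2 = Set.Icc h.σ 2 := by
  have hc := laff_c_pos g h
  have h2 : (2 : ℝ) - g.σ ≠ 0 := by linarith [g.σ_lt_two]
  have heq : laff g h = (((2 - h.σ) / (2 - g.σ)) * · + (h.σ - (2 - h.σ) / (2 - g.σ) * g.σ)) := rfl
  rw [heq, Set.image_affine_Icc' hc]
  have e1 : (2 - h.σ) / (2 - g.σ) * g.σ + (h.σ - (2 - h.σ) / (2 - g.σ) * g.σ) = h.σ := by ring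
  have e2 : (2 - h.σ) / (2 - g.σ) * 2 + (h.σ - (2 - h.σ) / (2 - g.σ) * g.σ) = 2 := by
    field_simp
    ring
  rw [e1, e2]

lemma laff_mono (g h : GPath) : StrictMonoOn (laff g h) (Set.Icc g.σ 2) := by
  have hc := laff_c_pos g h
  intro x _ y _ hxy
  simp only [laff]
  linarith [mul_lt_mul_of_pos_left hxy hc]

lemma gamma_laff_le (g h : GPath) :
    gamma g (laff g h) ≤ ENNReal.ofReal |Real.log ((2 - h.σ) / (2 - g.σ))| := by
  refine iSup_le fun p => ?_
  obtain ⟨⟨t, s⟩, h1, h2, h3⟩ := p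
  simp only [laff]
  have : (2 - h.σ) / (2 - g.σ) * s + (h.σ - (2 - h.σ) / (2 - g.σ) * g.σ) -
      ((2 - h.σ) / (2 - g.σ) * t + (h.σ - (2 - h.σ) / (2 - g.σ) * g.σ)) =
      (2 - h.σ) / (2 - g.σ) * (s - t) := by ring
  rw [this, mul_div_assoc, div_self (by linarith : s - t ≠ 0), mul_one]

lemma dSup_le_two (g h : GPath) (l : ℝ → ℝ) (him : l '' Set.Icc g.σ 2 = Set.Icc h.σ 2) :
    dSup g h l ≤ ENNReal.ofReal 2 := by
  refine iSup_le fun p => ?_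
  obtain ⟨t, ht⟩ := p
  have h1 := g.mem_range t ht
  have h2 : l t ∈ Set.Icc h.σ 2 := him ▸ Set.mem_image_of_mem l ht
  have h3 := h.mem_range (l t) h2
  refine ENNReal.ofReal_le_ofReal ?_
  rw [abs_sub_le_iff]
  constructor <;> [skip; skip] <;> simp only [Set.mem_Icc] at h1 h3 <;> linarith

lemma laff_mem_Lam (g h : GPath) : laff g h ∈ Lam g h :=
  ⟨laff_mono g h, laff_image g h,
    ne_top_of_le_ne_top ENNReal.ofReal_ne_top (gamma_laff_le g h)⟩

lemma rho_lt_top (g h : GPath) : rho g h < ⊤ := by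
  have := rho_le g h (laff_mem_Lam g h)
  refine lt_of_le_of_lt (this.trans (max_le_max (gamma_laff_le g h) (dSup_le_two g h _ (laff_image g h)))) ?_
  rw [max_lt_iff]
  exact ⟨ENNReal.ofReal_lt_top, ENNReal.ofReal_lt_top⟩

lemma Gdist_arg_ne_top (g h : GPath) :
    max (rho g h) (ENNReal.ofReal |g.σ - h.σ|) ≠ ⊤ := by
  rw [Ne, max_eq_top]
  push_neg
  exact ⟨(rho_lt_top g h).ne, ENNReal.ofReal_ne_top⟩
lemma abs_log_div_comm (a b : ℝ) : |Real.log (b / a)| = |Real.log (a / b)| := by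
  rw [← inv_div a b, Real.log_inv, abs_neg]

lemma lam_apply_left {g h : GPath} {l : ℝ → ℝ} (hl : l ∈ Lam g h) : l g.σ = h.σ := by
  obtain ⟨hmono, him, -⟩ := hl
  have hσg : g.σ ∈ Set.Icc g.σ 2 := ⟨le_refl _, g.σ_lt_two.le⟩
  have h1 : l g.σ ∈ Set.Icc h.σ 2 := him ▸ Set.mem_image_of_mem l hσg
  have h2 : h.σ ∈ Set.Icc h.σ 2 := ⟨le_refl _, h.σ_lt_two.le⟩
  rw [← him] at h2
  obtain ⟨t, ht, hlt⟩ := h2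
  exact le_antisymm (hlt ▸ hmono.monotoneOn hσg ht ht.1) h1.1

noncomputable def linv (g : GPath) (l : ℝ → ℝ) : ℝ → ℝ :=
  Function.invFunOn l (Set.Icc g.σ 2)

lemma linv_exists {g h : GPath} {l : ℝ → ℝ} (hl : l ∈ Lam g h) {u : ℝ}
    (hu : u ∈ Set.Icc h.σ 2) : ∃ a ∈ Set.Icc g.σ 2, l a = u := by
  have : u ∈ l '' Set.Icc g.σ 2 := hl.2.1 ▸ hu
  obtain ⟨a, ha, rfl⟩ := this
  exact ⟨a, ha, rfl⟩

lemma linv_mem {g h : GPath} {l : ℝ → ℝ} (hl : l ∈ Lam g h) {u : ℝ}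
    (hu : u ∈ Set.Icc h.σ 2) : linv g l u ∈ Set.Icc g.σ 2 :=
  Function.invFunOn_mem (linv_exists hl hu)

lemma linv_apply {g h : GPath} {l : ℝ → ℝ} (hl : l ∈ Lam g h) {u : ℝ}
    (hu : u ∈ Set.Icc h.σ 2) : l (linv g l u) = u :=
  Function.invFunOn_eq (linv_exists hl hu)

lemma linv_left {g h : GPath} {l : ℝ → ℝ} (hl : l ∈ Lam g h) {t : ℝ}
    (ht : t ∈ Set.Icc g.σ 2) : linv g l (l t) = t :=
  hl.1.injOn.leftInvOn_invFunOn ht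

lemma linv_mono {g h : GPath} {l : ℝ → ℝ} (hl : l ∈ Lam g h) :
    StrictMonoOn (linv g l) (Set.Icc h.σ 2) := by
  intro u hu v hv huv
  by_contra hle
  push_neg at hle
  have := hl.1.monotoneOn (linv_mem hl hv) (linv_mem hl hu) hle
  rw [linv_apply hl hu, linv_apply hl hv] at this
  exact absurd huv (not_lt.mpr this)

lemma linv_image {g h : GPath} {l : ℝ → ℝ} (hl : l ∈ Lam g h) :
    linv g l '' Set.Icc h.σ 2 = Set.Icc g.σ 2 := by
  apply Set.Subset.antisymm
  · rintro _ ⟨u, hu, rfl⟩; exact linv_mem hl hu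
  · intro t ht
    exact ⟨l t, hl.2.1 ▸ Set.mem_image_of_mem l ht, linv_left hl ht⟩

lemma gamma_linv {g h : GPath} {l : ℝ → ℝ} (hl : l ∈ Lam g h) :
    gamma h (linv g l) = gamma g l := by
  apply le_antisymm
  · refine iSup_le fun p => ?_
    obtain ⟨⟨u, v⟩, h1, h2, h3⟩ := p
    have hu : u ∈ Set.Icc h.σ 2 := ⟨h1, by linarith⟩
    have hv : v ∈ Set.Icc h.σ 2 := ⟨by linarith, h3⟩
    have hts : linv g l u < linv g l v := linv_mono hl hu hv h2
    have key : (linv g l v - linv g l u) / (v - u) =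
        (linv g l v - linv g l u) / (l (linv g l v) - l (linv g l u)) := by
      rw [linv_apply hl hu, linv_apply hl hv]
    rw [key, abs_log_div_comm]
    exact le_gamma g l (linv_mem hl hu).1 hts (linv_mem hl hv).2
  · refine iSup_le fun p => ?_
    obtain ⟨⟨t, s⟩, h1, h2, h3⟩ := p
    have ht : t ∈ Set.Icc g.σ 2 := ⟨h1, by linarith⟩
    have hs : s ∈ Set.Icc g.σ 2 := ⟨by linarith, h3⟩
    have huv : l t < l s := hl.1 ht hs h2
    have hu : l t ∈ Set.Icc h.σ 2 := hl.2.1 ▸ Set.mem_image_of_mem l ht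
    have hv : l s ∈ Set.Icc h.σ 2 := hl.2.1 ▸ Set.mem_image_of_mem l hs
    have key : (l s - l t) / (s - t) =
        (l s - l t) / (linv g l (l s) - linv g l (l t)) := by
      rw [linv_left hl ht, linv_left hl hs]
    rw [key, abs_log_div_comm]
    exact le_gamma h (linv g l) hu.1 huv hv.2

lemma dSup_linv {g h : GPath} {l : ℝ → ℝ} (hl : l ∈ Lam g h) :
    dSup h g (linv g l) = dSup g h l := by
  apply le_antisymm
  · refine iSup_le fun p => ?_
    obtain ⟨u, hu⟩ := p
    have h1 := le_dSup g h l (linv_mem hl hu)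
    rw [linv_apply hl hu] at h1
    rw [abs_sub_comm] at h1
    exact h1
  · refine iSup_le fun p => ?_
    obtain ⟨t, ht⟩ := p
    have hu : l t ∈ Set.Icc h.σ 2 := hl.2.1 ▸ Set.mem_image_of_mem l ht
    have h1 := le_dSup h g (linv g l) hu
    rw [linv_left hl ht, abs_sub_comm] at h1
    exact h1

lemma linv_mem_Lam {g h : GPath} {l : ℝ → ℝ} (hl : l ∈ Lam g h) : linv g l ∈ Lam h g :=
  ⟨linv_mono hl, linv_image hl, by rw [gamma_linv hl]; exact hl.2.2⟩

lemma rho_symm_le (g h : GPath) : rho h g ≤ rho g h := by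
  refine le_iInf₂ fun l hl => ?_
  have := rho_le h g (linv_mem_Lam hl)
  rwa [gamma_linv hl, dSup_linv hl] at this

lemma rho_symm (g h : GPath) : rho g h = rho h g :=
  le_antisymm (rho_symm_le h g) (rho_symm_le g h)
lemma gamma_comp_le {f g h : GPath} {l1 l2 : ℝ → ℝ} (h1 : l1 ∈ Lam f g) (h2 : l2 ∈ Lam g h) :
    gamma f (l2 ∘ l1) ≤ gamma f l1 + gamma g l2 := by
  refine iSup_le fun p => ?_
  obtain ⟨⟨t, s⟩, p1, p2, p3⟩ := p
  have ht : t ∈ Set.Icc f.σ 2 := ⟨p1, by linarith⟩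
  have hs : s ∈ Set.Icc f.σ 2 := ⟨by linarith, p3⟩
  have hu : l1 t ∈ Set.Icc g.σ 2 := h1.2.1 ▸ Set.mem_image_of_mem l1 ht
  have hv : l1 s ∈ Set.Icc g.σ 2 := h1.2.1 ▸ Set.mem_image_of_mem l1 hs
  have huv : l1 t < l1 s := h1.1 ht hs p2
  have hw : l2 (l1 t) < l2 (l1 s) := h2.1 hu hv huv
  have hst : (0:ℝ) < s - t := by linarith
  have huv' : (0:ℝ) < l1 s - l1 t := by linarith
  have hst' : s - t ≠ 0 := hst.ne'
  have huv'' : l1 s - l1 t ≠ 0 := huv'.ne'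
  have key : (l2 (l1 s) - l2 (l1 t)) / (s - t) =
      ((l1 s - l1 t) / (s - t)) * ((l2 (l1 s) - l2 (l1 t)) / (l1 s - l1 t)) := by
    field_simp
  have hB : (l1 s - l1 t) / (s - t) ≠ 0 := (div_pos huv' hst).ne'
  have hA : (l2 (l1 s) - l2 (l1 t)) / (l1 s - l1 t) ≠ 0 :=
    (div_pos (by linarith : (0:ℝ) < l2 (l1 s) - l2 (l1 t)) huv').ne'
  simp only [Function.comp]
  rw [key, Real.log_mul hB hA]
  calc ENNReal.ofReal |Real.log ((l1 s - l1 t) / (s - t)) +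
        Real.log ((l2 (l1 s) - l2 (l1 t)) / (l1 s - l1 t))|
      ≤ ENNReal.ofReal (|Real.log ((l1 s - l1 t) / (s - t))| +
        |Real.log ((l2 (l1 s) - l2 (l1 t)) / (l1 s - l1 t))|) :=
        ENNReal.ofReal_le_ofReal (abs_add_le _ _)
    _ ≤ ENNReal.ofReal |Real.log ((l1 s - l1 t) / (s - t))| +
        ENNReal.ofReal |Real.log ((l2 (l1 s) - l2 (l1 t)) / (l1 s - l1 t))| :=
        ENNReal.ofReal_add_le
    _ ≤ gamma f l1 + gamma g l2 :=
        add_le_add (le_gamma f l1 p1 p2 p3) (le_gamma g l2 hu.1 huv hv.2)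

lemma dSup_comp_le {f g h : GPath} {l1 l2 : ℝ → ℝ} (h1 : l1 ∈ Lam f g) (h2 : l2 ∈ Lam g h) :
    dSup f h (l2 ∘ l1) ≤ dSup f g l1 + dSup g h l2 := by
  refine iSup_le fun p => ?_
  obtain ⟨t, ht⟩ := p
  have hu : l1 t ∈ Set.Icc g.σ 2 := h1.2.1 ▸ Set.mem_image_of_mem l1 ht
  calc ENNReal.ofReal |f.f t - h.f ((l2 ∘ l1) t)|
      ≤ ENNReal.ofReal (|f.f t - g.f (l1 t)| + |g.f (l1 t) - h.f (l2 (l1 t))|) :=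
        ENNReal.ofReal_le_ofReal (abs_sub_le _ _ _)
    _ ≤ ENNReal.ofReal |f.f t - g.f (l1 t)| + ENNReal.ofReal |g.f (l1 t) - h.f (l2 (l1 t))| :=
        ENNReal.ofReal_add_le
    _ ≤ dSup f g l1 + dSup g h l2 :=
        add_le_add (le_dSup f g l1 ht) (le_dSup g h l2 hu)

lemma comp_mem_Lam {f g h : GPath} {l1 l2 : ℝ → ℝ} (h1 : l1 ∈ Lam f g) (h2 : l2 ∈ Lam g h) :
    (l2 ∘ l1) ∈ Lam f h := by
  refine ⟨?_, ?_, ?_⟩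
  · intro x hx y hy hxy
    exact h2.1 (h1.2.1 ▸ Set.mem_image_of_mem l1 hx) (h1.2.1 ▸ Set.mem_image_of_mem l1 hy)
      (h1.1 hx hy hxy)
  · rw [Set.image_comp, h1.2.1, h2.2.1]
  · exact ne_top_of_le_ne_top (ENNReal.add_ne_top.2 ⟨h1.2.2, h2.2.2⟩) (gamma_comp_le h1 h2)

lemma rho_triangle (f g h : GPath) : rho f h ≤ rho f g + rho g h := by
  refine ENNReal.le_of_forall_pos_le_add fun ε hε hfin => ?_
  have hε2 : (0 : ℝ≥0∞) < (ε : ℝ≥0∞) / 2 := by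
    apply ENNReal.div_pos (by exact_mod_cast hε.ne') (by norm_num)
  have e1 : rho f g < rho f g + (ε : ℝ≥0∞) / 2 :=
    ENNReal.lt_add_right (rho_lt_top f g).ne hε2.ne'
  have e2 : rho g h < rho g h + (ε : ℝ≥0∞) / 2 :=
    ENNReal.lt_add_right (rho_lt_top g h).ne hε2.ne'
  rw [rho, iInf_lt_iff] at e1 e2
  obtain ⟨l1, hl1⟩ := e1
  rw [iInf_lt_iff] at hl1
  obtain ⟨hm1, hlt1⟩ := hl1
  obtain ⟨l2, hl2⟩ := e2
  rw [iInf_lt_iff] at hl2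
  obtain ⟨hm2, hlt2⟩ := hl2
  have step := rho_le f h (comp_mem_Lam hm1 hm2)
  have step2 : max (gamma f (l2 ∘ l1)) (dSup f h (l2 ∘ l1)) ≤
      max (gamma f l1) (dSup f g l1) + max (gamma g l2) (dSup g h l2) := by
    refine max_le ?_ ?_
    · exact (gamma_comp_le hm1 hm2).trans
        (add_le_add (le_max_left _ _) (le_max_left _ _))
    · exact (dSup_comp_le hm1 hm2).trans
        (add_le_add (le_max_right _ _) (le_max_right _ _))
  calc rho f h ≤ _ := step
    _ ≤ _ := step2
    _ ≤ (rho f g + (ε : ℝ≥0∞) / 2) + (rho g h + (ε : ℝ≥0∞) / 2) :=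
        add_le_add hlt1.le hlt2.le
    _ = rho f g + rho g h + ((ε : ℝ≥0∞) / 2 + (ε : ℝ≥0∞) / 2) := by ring
    _ = rho f g + rho g h + ε := by rw [ENNReal.add_halves]
lemma exists_small (g h : GPath) (hρ : rho g h = 0) {ε : ℝ} (hε : 0 < ε) :
    ∃ l ∈ Lam g h, gamma g l < ENNReal.ofReal ε ∧ dSup g h l < ENNReal.ofReal ε := by
  have hlt : rho g h < ENNReal.ofReal ε := by rw [hρ]; exact ENNReal.ofReal_pos.2 hε
  rw [rho, iInf_lt_iff] at hlt
  obtain ⟨l, hl⟩ := hlt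
  rw [iInf_lt_iff] at hl
  obtain ⟨hm, hlt⟩ := hl
  rw [max_lt_iff] at hlt
  exact ⟨l, hm, hlt.1, hlt.2⟩

lemma lam_displacement {g h : GPath} (hσ : g.σ = h.σ) {l : ℝ → ℝ} (hl : l ∈ Lam g h)
    {ε : ℝ} (hε : 0 < ε) (hγ : gamma g l < ENNReal.ofReal ε) {s : ℝ}
    (hs1 : g.σ < s) (hs2 : s ≤ 2) : |l s - s| ≤ 3 * (Real.exp ε - 1) := by
  have h0 : l g.σ = g.σ := by rw [lam_apply_left hl, hσ]
  have hterm := lt_of_le_of_lt (le_gamma g l (le_refl g.σ) hs1 hs2) hγ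
  rw [ENNReal.ofReal_lt_ofReal_iff hε] at hterm
  set x := (l s - l g.σ) / (s - g.σ) with hx
  have hσ2 : g.σ ∈ Set.Icc g.σ 2 := ⟨le_refl _, g.σ_lt_two.le⟩
  have hsm : s ∈ Set.Icc g.σ 2 := ⟨hs1.le, hs2⟩
  have hmon := hl.1 hσ2 hsm hs1
  have hpos : 0 < x := div_pos (by linarith) (by linarith)
  rw [abs_lt] at hterm
  have hub : x < Real.exp ε := by
    have := Real.exp_lt_exp.2 hterm.2
    rwa [Real.exp_log hpos] at this
  have hlb : Real.exp (-ε) < x := by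
    have := Real.exp_lt_exp.2 hterm.1
    rwa [Real.exp_log hpos] at this
  have hme : Real.exp (-ε) * Real.exp ε = 1 := by rw [← Real.exp_add]; simp
  have hexp1 : 1 < Real.exp ε := by
    have := Real.add_one_le_exp ε; linarith
  have habs : |x - 1| ≤ Real.exp ε - 1 := by
    rw [abs_le]
    constructor
    · nlinarith [sq_nonneg (Real.exp ε - 1), Real.exp_pos ε]
    · linarith
  have hls : l s - g.σ = x * (s - g.σ) := by
    rw [hx, div_mul_cancel₀ _ (by linarith : s - g.σ ≠ 0), h0]
  have hkey : l s - s = (x - 1) * (s - g.σ) := by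
    rw [sub_mul, ← hls]; ring
  rw [hkey, abs_mul]
  have h3 : |s - g.σ| ≤ 3 := by
    rw [abs_of_pos (by linarith)]
    linarith [g.neg_one_le_σ]
  have := mul_le_mul habs h3 (abs_nonneg _) (by linarith : (0:ℝ) ≤ Real.exp ε - 1)
  linarith

lemma f_eq_on_Ico {g h : GPath} (hσ : g.σ = h.σ) (hρ : rho g h = 0) {t : ℝ}
    (ht : t ∈ Set.Ico g.σ 2) : g.f t = h.f t := by
  have key : ∀ η > (0:ℝ), |g.f t - h.f t| ≤ 3 * η := by
    intro η hη
    have ht' : t ∈ Set.Ico h.σ 2 := by rw [← hσ]; exact ht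
    have hg := g.right_cont t ht
    have hh := h.right_cont t ht'
    rw [Metric.continuousWithinAt_iff] at hg hh
    obtain ⟨δ1, hδ1, Hg⟩ := hg η hη
    obtain ⟨δ2, hδ2, Hh⟩ := hh η hη
    set δ0 := min δ1 δ2 with hδ0def
    have hδ0 : 0 < δ0 := lt_min hδ1 hδ2
    set r := min δ0 (2 - t) / 2 with hrdef
    have ht2 : t < 2 := ht.2
    have hr : 0 < r := by
      apply div_pos (lt_min hδ0 (by linarith)) two_pos
    have hrδ0 : r ≤ δ0 / 2 := by
      have := min_le_left δ0 (2 - t); rw [hrdef]; linarith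
    have hrt : r ≤ (2 - t) / 2 := by
      have := min_le_right δ0 (2 - t); rw [hrdef]; linarith
    set s := t + r with hsdef
    have hs2 : s < 2 := by
      rw [hsdef]; linarith
    set ε := min η (Real.log (1 + r / 6)) with hεdef
    have hεpos : 0 < ε := lt_min hη (Real.log_pos (by linarith))
    obtain ⟨l, hm, hγ, hd⟩ := exists_small g h hρ hεpos
    have hdisp := lam_displacement hσ hm hεpos hγ
      (show g.σ < s by have := ht.1; rw [hsdef]; linarith) hs2.le
    have hexp : Real.exp ε ≤ 1 + r / 6 := by
      have h1 : Real.exp ε ≤ Real.exp (Real.log (1 + r / 6)) :=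
        Real.exp_le_exp.2 (min_le_right _ _)
      rwa [Real.exp_log (by linarith)] at h1
    have hdisp' : |l s - s| ≤ r / 2 := by
      have : 3 * (Real.exp ε - 1) ≤ r / 2 := by linarith
      linarith [hdisp]
    have hsmem : s ∈ Set.Icc g.σ 2 := ⟨by rw [hsdef]; linarith [ht.1], hs2.le⟩
    have habs : |l s - s| ≤ r / 2 := hdisp'
    rw [abs_le] at habs
    -- g continuity at s
    have hgs : |g.f s - g.f t| < η := by
      have hd1 : dist s t < δ1 := by
        rw [Real.dist_eq, hsdef, add_sub_cancel_left, abs_of_pos hr]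
        have : δ0 ≤ δ1 := min_le_left _ _
        linarith
      have := Hg (show s ∈ Set.Ici t by rw [hsdef]; simp; linarith) hd1
      rwa [Real.dist_eq] at this
    -- h continuity at l s
    have hls_ge : t ≤ l s := by rw [hsdef] at habs ⊢; linarith [habs.1]
    have hhs : |h.f (l s) - h.f t| < η := by
      have hd2 : dist (l s) t < δ2 := by
        rw [Real.dist_eq]
        have h1 : |l s - t| ≤ |l s - s| + |s - t| := by
          have := abs_sub_le (l s) s t
          linarith
        have h2 : |s - t| = r := by rw [hsdef, add_sub_cancel_left, abs_of_pos hr]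
        have h3 : δ0 ≤ δ2 := min_le_right _ _
        calc |l s - t| ≤ r / 2 + r := by rw [h2] at h1; linarith [hdisp']
          _ < δ0 := by linarith
          _ ≤ δ2 := h3
      have := Hh (show l s ∈ Set.Ici t from hls_ge) hd2
      rwa [Real.dist_eq] at this
    -- dSup bound
    have hdt : |g.f s - h.f (l s)| < η := by
      have h1 := lt_of_le_of_lt (le_dSup g h l hsmem) hd
      rw [ENNReal.ofReal_lt_ofReal_iff hεpos] at h1
      exact lt_of_lt_of_le h1 (min_le_left _ _)
    have e1 := abs_sub_le (g.f t) (g.f s) (h.f t)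
    have e2 := abs_sub_le (g.f s) (h.f (l s)) (h.f t)
    have e3 : |g.f t - g.f s| = |g.f s - g.f t| := abs_sub_comm _ _
    linarith
  have h0 : |g.f t - h.f t| ≤ 0 := by
    by_contra hc
    push_neg at hc
    have := key (|g.f t - h.f t| / 4) (by linarith)
    linarith
  have := abs_nonpos_iff.1 h0
  linarith [this, abs_nonneg (g.f t - h.f t)]

lemma GPath.ext' {g h : GPath} (h1 : g.σ = h.σ) (h2 : g.f = h.f) : g = h := by
  obtain ⟨gσ, a1, gf, a2, a3, a4, a5, a6, a7⟩ := g
  obtain ⟨hσ', b1, hf, b2, b3, b4, b5, b6, b7⟩ := h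
  simp only at h1 h2
  subst h1; subst h2
  rfl

lemma eq_of_rho_zero {g h : GPath} (hσ : g.σ = h.σ) (hρ : rho g h = 0) : g = h := by
  apply GPath.ext' hσ
  funext t
  rcases le_or_gt t g.σ with hle | hgt
  · have hle' : t ≤ h.σ := hσ ▸ hle
    rw [g.ext_left t hle, h.ext_left t hle', ← hσ]
    exact f_eq_on_Ico hσ hρ ⟨le_refl _, g.σ_lt_two⟩
  · rcases lt_or_ge t 2 with h2 | h2
    · exact f_eq_on_Ico hσ hρ ⟨hgt.le, h2⟩
    · rw [g.ext_right t h2, h.ext_right t h2,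
        g.const_tail 2 ⟨one_le_two, le_refl _⟩, h.const_tail 2 ⟨one_le_two, le_refl _⟩]
      exact f_eq_on_Ico hσ hρ ⟨g.σ_le_one, one_lt_two⟩

/-- `d` is a metric on `G`: it is nonnegative, vanishes exactly on the diagonal,
is symmetric, and satisfies the triangle inequality. -/
theorem Gdist_is_metric :
    (∀ g h : GPath, 0 ≤ Gdist g h) ∧
    (∀ g h : GPath, Gdist g h = 0 ↔ g = h) ∧
    (∀ g h : GPath, Gdist g h = Gdist h g) ∧
    (∀ f g h : GPath, Gdist f h ≤ Gdist f g + Gdist g h) := by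
  refine ⟨fun g h => ENNReal.toReal_nonneg, fun g h => ?_, fun g h => ?_, fun f g h => ?_⟩
  · constructor
    · intro hz
      rw [Gdist, ENNReal.toReal_eq_zero_iff] at hz
      rcases hz with hz | hz
      · have hσ : g.σ = h.σ := by
          have h1 : ENNReal.ofReal |g.σ - h.σ| = 0 :=
            le_antisymm (hz ▸ le_max_right _ _) (zero_le)
          rw [ENNReal.ofReal_eq_zero] at h1
          have := abs_nonpos_iff.1 h1
          linarith [sub_eq_zero.1 (abs_nonpos_iff.1 h1)]
        have hρ : rho g h = 0 := le_antisymm (hz ▸ le_max_left _ _) (zero_le)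
        exact eq_of_rho_zero hσ hρ
      · exact absurd hz (Gdist_arg_ne_top g h)
    · rintro rfl
      rw [Gdist, rho_self, sub_self, abs_zero, ENNReal.ofReal_zero, max_self,
        ENNReal.toReal_zero]
  · rw [Gdist, Gdist, rho_symm, abs_sub_comm]
  · have key : max (rho f h) (ENNReal.ofReal |f.σ - h.σ|) ≤
        max (rho f g) (ENNReal.ofReal |f.σ - g.σ|) +
        max (rho g h) (ENNReal.ofReal |g.σ - h.σ|) := by
      refine max_le ?_ ?_
      · exact (rho_triangle f g h).trans
          (add_le_add (le_max_left _ _) (le_max_left _ _))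
      · calc ENNReal.ofReal |f.σ - h.σ|
            ≤ ENNReal.ofReal (|f.σ - g.σ| + |g.σ - h.σ|) :=
              ENNReal.ofReal_le_ofReal (abs_sub_le _ _ _)
          _ = ENNReal.ofReal |f.σ - g.σ| + ENNReal.ofReal |g.σ - h.σ| :=
              ENNReal.ofReal_add (abs_nonneg _) (abs_nonneg _)
          _ ≤ _ := add_le_add (le_max_right _ _) (le_max_right _ _)
    rw [Gdist, Gdist, Gdist, ← ENNReal.toReal_add (Gdist_arg_ne_top f g) (Gdist_arg_ne_top g h)]
    exact ENNReal.toReal_mono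
      (ENNReal.add_ne_top.2 ⟨Gdist_arg_ne_top f g, Gdist_arg_ne_top g h⟩) key
end

section
/- Let $U_1, U_2, V$ be i.i.d. uniform random variables on $[-r, r]$, $r>0$, and write $U^{(1)} = \min(U_1, U_2, V)$. Set $Z_1 = \min(U_1, U_2)$. Then conditional on the event $\{V = U^{(1)}\}$ (i.e. $V < Z_1$), the random variables $Z_1 - V$ and $V - (-r)$ have the same distribution; and conditional on $\{V \ne U^{(1)}\}$ (i.e. $V > Z_1$), the random variables $V - Z_1$ and $r - V$ have the same distribution. -/
open MeasureTheory ProbabilityTheory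

/-- The uniform probability measure on the interval `[a, b]`. -/
noncomputable def uniformIcc (a b : ℝ) : Measure ℝ :=
  (ENNReal.ofReal (b - a))⁻¹ • (volume.restrict (Set.Icc a b))

lemma uniformIcc_slice_lt (r w : ℝ) (hw : w ∈ Set.Icc (-r) r) {A : Set ℝ}
    (hA : MeasurableSet A) :
    uniformIcc (-r) r {v | v < w ∧ w - v ∈ A} = uniformIcc (-r) r {v | v < w ∧ v + r ∈ A} := by
  have hm1 : MeasurableSet {v : ℝ | v < w ∧ w - v ∈ A} :=
    (measurableSet_Iio).inter ((measurable_const.sub measurable_id) hA)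
  have hm2 : MeasurableSet {v : ℝ | v < w ∧ v + r ∈ A} :=
    (measurableSet_Iio).inter ((measurable_id.add_const r) hA)
  unfold uniformIcc
  simp only [Measure.smul_apply, smul_eq_mul]
  rw [Measure.restrict_apply hm1, Measure.restrict_apply hm2]
  congr 1
  have e1 : {v : ℝ | v < w ∧ w - v ∈ A} ∩ Set.Icc (-r) r
      = (fun v => w - v) ⁻¹' (A ∩ Set.Ioc 0 (w + r)) := by
    ext v
    simp only [Set.mem_inter_iff, Set.mem_setOf_eq, Set.mem_Icc, Set.mem_preimage, Set.mem_Ioc]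
    constructor
    · rintro ⟨⟨h1, h2⟩, h3, h4⟩
      exact ⟨h2, by linarith, by linarith⟩
    · rintro ⟨h1, h2, h3⟩
      have hw2 := hw.2
      exact ⟨⟨by linarith, h1⟩, by linarith, by linarith⟩
  have e2 : {v : ℝ | v < w ∧ v + r ∈ A} ∩ Set.Icc (-r) r
      = (fun v => v + r) ⁻¹' (A ∩ Set.Ico 0 (w + r)) := by
    ext v
    simp only [Set.mem_inter_iff, Set.mem_setOf_eq, Set.mem_Icc, Set.mem_preimage, Set.mem_Ico]
    constructor
    · rintro ⟨⟨h1, h2⟩, h3, h4⟩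
      exact ⟨h2, by linarith, by linarith⟩
    · rintro ⟨h1, h2, h3⟩
      have hw2 := hw.2
      exact ⟨⟨by linarith, h1⟩, by linarith, by linarith⟩
  rw [e1, e2,
    (Measure.measurePreserving_sub_left volume w).measure_preimage
      (hA.inter measurableSet_Ioc).nullMeasurableSet,
    (measurePreserving_add_right volume r).measure_preimage
      (hA.inter measurableSet_Ico).nullMeasurableSet]
  exact (measure_congr ((Filter.EventuallyEq.refl _ A).inter Ico_ae_eq_Ioc)).symm

lemma uniformIcc_slice_gt (r w : ℝ) (hw : w ∈ Set.Icc (-r) r) {A : Set ℝ}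
    (hA : MeasurableSet A) :
    uniformIcc (-r) r {v | w < v ∧ v - w ∈ A} = uniformIcc (-r) r {v | w < v ∧ r - v ∈ A} := by
  have hm1 : MeasurableSet {v : ℝ | w < v ∧ v - w ∈ A} :=
    (measurableSet_Ioi).inter ((measurable_id.sub_const w) hA)
  have hm2 : MeasurableSet {v : ℝ | w < v ∧ r - v ∈ A} :=
    (measurableSet_Ioi).inter ((measurable_const.sub measurable_id) hA)
  unfold uniformIcc
  simp only [Measure.smul_apply, smul_eq_mul]
  rw [Measure.restrict_apply hm1, Measure.restrict_apply hm2]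
  congr 1
  have e1 : {v : ℝ | w < v ∧ v - w ∈ A} ∩ Set.Icc (-r) r
      = (fun v => v - w) ⁻¹' (A ∩ Set.Ioc 0 (r - w)) := by
    ext v
    simp only [Set.mem_inter_iff, Set.mem_setOf_eq, Set.mem_Icc, Set.mem_preimage, Set.mem_Ioc]
    constructor
    · rintro ⟨⟨h1, h2⟩, h3, h4⟩
      exact ⟨h2, by linarith, by linarith⟩
    · rintro ⟨h1, h2, h3⟩
      have hw1 := hw.1
      exact ⟨⟨by linarith, h1⟩, by linarith, by linarith⟩
  have e2 : {v : ℝ | w < v ∧ r - v ∈ A} ∩ Set.Icc (-r) r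
      = (fun v => r - v) ⁻¹' (A ∩ Set.Ico 0 (r - w)) := by
    ext v
    simp only [Set.mem_inter_iff, Set.mem_setOf_eq, Set.mem_Icc, Set.mem_preimage, Set.mem_Ico]
    constructor
    · rintro ⟨⟨h1, h2⟩, h3, h4⟩
      exact ⟨h2, by linarith, by linarith⟩
    · rintro ⟨h1, h2, h3⟩
      have hw1 := hw.1
      exact ⟨⟨by linarith, h1⟩, by linarith, by linarith⟩
  rw [e1, e2,
    (measurePreserving_sub_right volume w).measure_preimage
      (hA.inter measurableSet_Ioc).nullMeasurableSet,
    (Measure.measurePreserving_sub_left volume r).measure_preimage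
      (hA.inter measurableSet_Ico).nullMeasurableSet]
  exact (measure_congr ((Filter.EventuallyEq.refl _ A).inter Ico_ae_eq_Ioc)).symm

/-- If `U₁, U₂, V` are i.i.d. uniform on `[-r, r]` and `Z₁ = min(U₁, U₂)`, then
conditionally on `{V < Z₁}` the random variables `Z₁ - V` and `V + r` have the
same distribution, and conditionally on `{V > Z₁}` the random variables `V - Z₁`
and `r - V` have the same distribution. -/
theorem cond_dist_selective_event
    {Ω : Type*} [MeasureSpace Ω] [IsProbabilityMeasure (ℙ : Measure Ω)]
    (r : ℝ) (hr : 0 < r) (U₁ U₂ V : Ω → ℝ)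
    (hU₁ : Measurable U₁) (hU₂ : Measurable U₂) (hV : Measurable V)
    (hindep : iIndepFun ![U₁, U₂, V] ℙ)
    (hU₁law : Measure.map U₁ ℙ = uniformIcc (-r) r)
    (hU₂law : Measure.map U₂ ℙ = uniformIcc (-r) r)
    (hVlaw : Measure.map V ℙ = uniformIcc (-r) r) :
    (∀ A : Set ℝ, MeasurableSet A →
      (ℙ[|{ω | V ω < min (U₁ ω) (U₂ ω)}]) {ω | min (U₁ ω) (U₂ ω) - V ω ∈ A} =
        (ℙ[|{ω | V ω < min (U₁ ω) (U₂ ω)}]) {ω | V ω + r ∈ A}) ∧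
    (∀ A : Set ℝ, MeasurableSet A →
      (ℙ[|{ω | min (U₁ ω) (U₂ ω) < V ω}]) {ω | V ω - min (U₁ ω) (U₂ ω) ∈ A} =
        (ℙ[|{ω | min (U₁ ω) (U₂ ω) < V ω}]) {ω | r - V ω ∈ A}) := by
  set W : Ω → ℝ := fun ω => min (U₁ ω) (U₂ ω) with hWdef
  have hW : Measurable W := hU₁.min hU₂
  -- independence of W and V
  have hmeas : ∀ i, Measurable (![U₁, U₂, V] i) := by
    intro i
    fin_cases i <;> simp [hU₁, hU₂, hV]
  have hpair : IndepFun (fun ω => (U₁ ω, U₂ ω)) V ℙ := by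
    have h := hindep.indepFun_prodMk hmeas 0 1 2 (by decide) (by decide)
    simpa using h
  have hWV : IndepFun W V ℙ :=
    hpair.comp (measurable_fst.min measurable_snd) measurable_id
  have hmap : Measure.map (fun ω => (W ω, V ω)) ℙ = (Measure.map W ℙ).prod (Measure.map V ℙ) :=
    (indepFun_iff_map_prod_eq_prod_map_map hW.aemeasurable hV.aemeasurable).mp hWV
  -- W lands in [-r, r] almost surely
  have haeIcc : ∀ {f : Ω → ℝ}, Measurable f → Measure.map f ℙ = uniformIcc (-r) r →
      ∀ᵐ ω ∂(ℙ : Measure Ω), f ω ∈ Set.Icc (-r) r := by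
    intro f hf hflaw
    rw [ae_iff]
    have : {ω | ¬ f ω ∈ Set.Icc (-r) r} = f ⁻¹' (Set.Icc (-r) r)ᶜ := rfl
    rw [this, ← Measure.map_apply hf measurableSet_Icc.compl, hflaw]
    unfold uniformIcc
    simp [Measure.restrict_apply measurableSet_Icc.compl]
  have hWIcc : ∀ᵐ ω ∂(ℙ : Measure Ω), W ω ∈ Set.Icc (-r) r := by
    filter_upwards [haeIcc hU₁ hU₁law, haeIcc hU₂ hU₂law] with ω h1 h2
    exact ⟨le_min h1.1 h2.1, (min_le_left _ _).trans h1.2⟩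
  have hνW : ∀ᵐ w ∂(Measure.map W ℙ), w ∈ Set.Icc (-r) r :=
    (ae_map_iff hW.aemeasurable measurableSet_Icc).mpr hWIcc
  constructor
  · intro A hA
    have hS : MeasurableSet {ω | V ω < W ω} := measurableSet_lt hV hW
    rw [cond_apply hS, cond_apply hS]
    congr 1
    have hC1 : MeasurableSet {p : ℝ × ℝ | p.2 < p.1 ∧ p.1 - p.2 ∈ A} :=
      (measurableSet_lt measurable_snd measurable_fst).inter
        ((measurable_fst.sub measurable_snd) hA)
    have hC2 : MeasurableSet {p : ℝ × ℝ | p.2 < p.1 ∧ p.2 + r ∈ A} :=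
      (measurableSet_lt measurable_snd measurable_fst).inter
        ((measurable_snd.add_const r) hA)
    have e1 : {ω | V ω < W ω} ∩ {ω | W ω - V ω ∈ A}
        = (fun ω => (W ω, V ω)) ⁻¹' {p : ℝ × ℝ | p.2 < p.1 ∧ p.1 - p.2 ∈ A} := rfl
    have e2 : {ω | V ω < W ω} ∩ {ω | V ω + r ∈ A}
        = (fun ω => (W ω, V ω)) ⁻¹' {p : ℝ × ℝ | p.2 < p.1 ∧ p.2 + r ∈ A} := rfl
    rw [e1, e2, ← Measure.map_apply (hW.prodMk hV) hC1,
      ← Measure.map_apply (hW.prodMk hV) hC2, hmap,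
      Measure.prod_apply hC1, Measure.prod_apply hC2]
    refine lintegral_congr_ae ?_
    filter_upwards [hνW] with w hw
    have p1 : Prod.mk w ⁻¹' {p : ℝ × ℝ | p.2 < p.1 ∧ p.1 - p.2 ∈ A}
        = {v | v < w ∧ w - v ∈ A} := rfl
    have p2 : Prod.mk w ⁻¹' {p : ℝ × ℝ | p.2 < p.1 ∧ p.2 + r ∈ A}
        = {v | v < w ∧ v + r ∈ A} := rfl
    rw [p1, p2, hVlaw]
    exact uniformIcc_slice_lt r w hw hA
  · intro A hA
    have hS : MeasurableSet {ω | W ω < V ω} := measurableSet_lt hW hV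
    rw [cond_apply hS, cond_apply hS]
    congr 1
    have hC1 : MeasurableSet {p : ℝ × ℝ | p.1 < p.2 ∧ p.2 - p.1 ∈ A} :=
      (measurableSet_lt measurable_fst measurable_snd).inter
        ((measurable_snd.sub measurable_fst) hA)
    have hC2 : MeasurableSet {p : ℝ × ℝ | p.1 < p.2 ∧ r - p.2 ∈ A} :=
      (measurableSet_lt measurable_fst measurable_snd).inter
        ((measurable_const.sub measurable_snd) hA)
    have e1 : {ω | W ω < V ω} ∩ {ω | V ω - W ω ∈ A}
        = (fun ω => (W ω, V ω)) ⁻¹' {p : ℝ × ℝ | p.1 < p.2 ∧ p.2 - p.1 ∈ A} := rfl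
    have e2 : {ω | W ω < V ω} ∩ {ω | r - V ω ∈ A}
        = (fun ω => (W ω, V ω)) ⁻¹' {p : ℝ × ℝ | p.1 < p.2 ∧ r - p.2 ∈ A} := rfl
    rw [e1, e2, ← Measure.map_apply (hW.prodMk hV) hC1,
      ← Measure.map_apply (hW.prodMk hV) hC2, hmap,
      Measure.prod_apply hC1, Measure.prod_apply hC2]
    refine lintegral_congr_ae ?_
    filter_upwards [hνW] with w hw
    have p1 : Prod.mk w ⁻¹' {p : ℝ × ℝ | p.1 < p.2 ∧ p.2 - p.1 ∈ A}
        = {v | w < v ∧ v - w ∈ A} := rfl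
    have p2 : Prod.mk w ⁻¹' {p : ℝ × ℝ | p.1 < p.2 ∧ r - p.2 ∈ A}
        = {v | w < v ∧ r - v ∈ A} := rfl
    rw [p1, p2, hVlaw]
    exact uniformIcc_slice_gt r w hw hA
end
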